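/- Let α, β₁, β₂ be real numbers and σ > 0. The quadratic polynomial (λ − 1)² + (α² + β₁ + β₂)σ²(λ − 1) + (α²σ² + β₁β₂σ⁴) is Schur stable if and only if |(β₁ + β₂ + α²)σ² − 2| < 1 + (1 − β₁σ²)(1 − β₂σ²) and (1 − β₁σ²)(1 − β₂σ²) < 1. (This polynomial is the characteristic polynomial of generalized Gauss–Seidel extra-gradient on a bilinear game, per singular value σ; hence Gauss–Seidel EG converges linearly iff these conditions hold for all singular values σ of E.) -/

import Mathlib

lemma schur_quad (b c : ℝ) :
    (∀ z : ℂ, z ^ 2 + (b : ℂ) * z + (c : ℂ) = 0 → ‖z‖ < 1) ↔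
      (|b| < 1 + c ∧ c < 1) := by
  constructor
  · intro h
    rcases le_or_gt 0 (b ^ 2 - 4 * c) with hD | hD
    · -- real roots
      set s := Real.sqrt (b ^ 2 - 4 * c) with hs
      have hs2 : s ^ 2 = b ^ 2 - 4 * c := Real.sq_sqrt hD
      have hr1 : ((-b + s) / 2) ^ 2 + b * ((-b + s) / 2) + c = 0 := by nlinarith
      have hr2 : ((-b - s) / 2) ^ 2 + b * ((-b - s) / 2) + c = 0 := by nlinarith
      have h1 : |(-b + s) / 2| < 1 := by
        have := h (((-b + s) / 2 : ℝ) : ℂ)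
          (by exact_mod_cast congrArg (Complex.ofReal) hr1)
        rwa [Complex.norm_real, Real.norm_eq_abs] at this
      have h2 : |(-b - s) / 2| < 1 := by
        have := h (((-b - s) / 2 : ℝ) : ℂ)
          (by exact_mod_cast congrArg (Complex.ofReal) hr2)
        rwa [Complex.norm_real, Real.norm_eq_abs] at this
      rw [abs_lt] at h1 h2 ⊢
      constructor
      · constructor <;> nlinarith [h1.1, h1.2, h2.1, h2.2]
      · nlinarith [h1.1, h1.2, h2.1, h2.2]
    · -- complex conjugate roots
      set s := Real.sqrt (4 * c - b ^ 2) with hs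
      have hs2 : s ^ 2 = 4 * c - b ^ 2 := Real.sq_sqrt (by linarith)
      set z : ℂ := ⟨-b / 2, s / 2⟩ with hz
      have hroot : z ^ 2 + (b : ℂ) * z + (c : ℂ) = 0 := by
        rw [Complex.ext_iff]
        constructor <;>
          simp [hz, pow_two, Complex.mul_re, Complex.mul_im, Complex.add_re, Complex.add_im] <;>
          nlinarith
      have habs := h z hroot
      have hsq : ‖z‖ ^ 2 = c := by
        rw [Complex.sq_norm, Complex.normSq_apply]
        simp only [hz]
        nlinarith
      have hc1 : c < 1 := by nlinarith [norm_nonneg z]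
      have hc0 : 0 < c := by nlinarith
      refine ⟨?_, hc1⟩
      rw [abs_lt]
      constructor <;> nlinarith [sq_nonneg (1 - c), sq_nonneg (b + 1 + c), sq_nonneg (b - 1 - c)]
  · rintro ⟨h1, h2⟩ z hz
    rw [abs_lt] at h1
    have hre := congrArg Complex.re hz
    have him := congrArg Complex.im hz
    simp [pow_two, Complex.mul_re, Complex.mul_im, Complex.add_re, Complex.add_im] at hre him
    rcases eq_or_ne z.im 0 with hy0 | hy0
    · -- real root
      have hxeq : z.re ^ 2 + b * z.re + c = 0 := by rw [hy0] at hre; nlinarith [hre]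
      have hx1 : |z.re| < 1 := by
        rw [abs_lt]
        constructor
        · by_contra hle
          push_neg at hle
          nlinarith [h1.1, h1.2, h2, hxeq]
        · by_contra hle
          push_neg at hle
          nlinarith [h1.1, h1.2, h2, hxeq]
      calc ‖z‖ = |z.re| := by
            rw [Complex.norm_def, Complex.normSq_apply, hy0]
            rw [show z.re * z.re + 0 * 0 = z.re ^ 2 by ring, Real.sqrt_sq_eq_abs]
        _ < 1 := hx1
    · -- complex root: re = -b/2, |z|^2 = c
      have hxb : 2 * z.re + b = 0 := by
        have : z.im * (2 * z.re + b) = 0 := by nlinarith [him]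
        rcases mul_eq_zero.mp this with h | h
        · exact absurd h hy0
        · exact h
      have hsq : ‖z‖ ^ 2 = c := by
        rw [Complex.sq_norm, Complex.normSq_apply]
        nlinarith [hre]
      nlinarith [norm_nonneg z]

/-- Gauss–Seidel extra-gradient on a bilinear game: the characteristic polynomial
`(λ − 1)² + (α² + β₁ + β₂)σ²(λ − 1) + (α²σ² + β₁β₂σ⁴)` is Schur stable iff
`|(β₁ + β₂ + α²)σ² − 2| < 1 + (1 − β₁σ²)(1 − β₂σ²)` and
`(1 − β₁σ²)(1 − β₂σ²) < 1`. -/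
theorem gauss_seidel_eg_schur (α β₁ β₂ σ : ℝ) (hσ : 0 < σ) :
    (∀ z : ℂ, (z - 1) ^ 2 + (((α ^ 2 + β₁ + β₂) * σ ^ 2 : ℝ) : ℂ) * (z - 1) +
          ((α ^ 2 * σ ^ 2 + β₁ * β₂ * σ ^ 4 : ℝ) : ℂ) = 0 → ‖z‖ < 1) ↔
      (|(β₁ + β₂ + α ^ 2) * σ ^ 2 - 2| < 1 + (1 - β₁ * σ ^ 2) * (1 - β₂ * σ ^ 2) ∧
        (1 - β₁ * σ ^ 2) * (1 - β₂ * σ ^ 2) < 1) := by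
  have key := schur_quad ((α ^ 2 + β₁ + β₂) * σ ^ 2 - 2)
    ((1 - β₁ * σ ^ 2) * (1 - β₂ * σ ^ 2))
  have hb : |(β₁ + β₂ + α ^ 2) * σ ^ 2 - 2| = |(α ^ 2 + β₁ + β₂) * σ ^ 2 - 2| := by
    ring_nf
  rw [hb]
  rw [← key]
  apply forall_congr'
  intro z
  constructor <;> intro h hz <;> apply h <;> rw [← hz] <;> push_cast <;> ring
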